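/- For every formula χ of the dynamic language L≤! (preference logic extended with public announcement modalities), there exists a formula χ' of the static language L≤ such that for every preference model M = (W, ≤, v) and every world w ∈ W, M, w ⊨ χ iff M, w ⊨ χ'. (Public announcement adds no expressive power to Preference Logic.) -/

import Mathlib

/-- Propositional formulas over atoms `P`. -/
inductive Form0 (P : Type) : Type
  | atom : P → Form0 P
  | neg : Form0 P → Form0 P
  | and : Form0 P → Form0 P → Form0 P

/-- The dynamic language `L≤!`: preference logic (atoms, ¬, ∧, the universal modality
`A`, `[≤]`, `[<]`) extended with public announcement modalities `[!φ₀]ψ` for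
propositional `φ₀`. -/
inductive Form (P : Type) : Type
  | atom : P → Form P
  | neg : Form P → Form P
  | and : Form P → Form P → Form P
  | all : Form P → Form P
  | boxle : Form P → Form P
  | boxlt : Form P → Form P
  | ann : Form0 P → Form P → Form P

/-- A formula of the dynamic language is static (belongs to `L≤`) iff it contains no
announcement modality. -/
def Form.isStatic {P : Type} : Form P → Prop
  | .atom _ => True
  | .neg φ => φ.isStatic
  | .and φ ψ => φ.isStatic ∧ ψ.isStatic
  | .all φ => φ.isStatic
  | .boxle φ => φ.isStatic
  | .boxlt φ => φ.isStatic
  | .ann _ _ => False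

/-- A preference model: worlds, a reflexive transitive relation, and a valuation. -/
structure PrefModel (P : Type) where
  W : Type
  le : W → W → Prop
  refl : Reflexive le
  trans : Transitive le
  v : P → Set W

/-- Satisfaction of propositional formulas (depends only on the valuation). -/
def sat0 {P W : Type} (v : P → Set W) (w : W) : Form0 P → Prop
  | .atom p => w ∈ v p
  | .neg φ => ¬ sat0 v w φ
  | .and φ ψ => sat0 v w φ ∧ sat0 v w ψ

/-- The model `M_{!φ₀}` resulting from publicly announcing the propositional formula
`φ₀` in `M`: the worlds are those satisfying `φ₀`, with `le` and `v` restricted. -/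
def PrefModel.announce {P : Type} (M : PrefModel P) (φ₀ : Form0 P) : PrefModel P where
  W := {w : M.W // sat0 M.v w φ₀}
  le := fun w w' => M.le w.val w'.val
  refl := fun w => M.refl w.val
  trans := fun _ _ _ h h' => M.trans h h'
  v := fun p => {w | w.val ∈ M.v p}

/-- Satisfaction for the dynamic language `L≤!`. -/
def sat {P : Type} : (M : PrefModel P) → M.W → Form P → Prop
  | M, w, .atom p => w ∈ M.v p
  | M, w, .neg φ => ¬ sat M w φ
  | M, w, .and φ ψ => sat M w φ ∧ sat M w ψ
  | M, _, .all φ => ∀ w' : M.W, sat M w' φ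
  | M, w, .boxle φ => ∀ w' : M.W, M.le w' w → sat M w' φ
  | M, w, .boxlt φ => ∀ w' : M.W, (M.le w' w ∧ ¬ M.le w w') → sat M w' φ
  | M, w, .ann φ₀ ψ => ∀ h : sat0 M.v w φ₀, sat (M.announce φ₀) ⟨w, h⟩ ψ

/-- Embed propositional formulas into the full language. -/
def Form0.toForm {P : Type} : Form0 P → Form P
  | .atom p => .atom p
  | .neg φ => .neg φ.toForm
  | .and φ ψ => .and φ.toForm ψ.toForm

def Form.impl {P : Type} (α β : Form P) : Form P := .neg (.and α (.neg β))

/-- Relativization of a (static) formula by a propositional formula. -/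
def Form.rel {P : Type} (α : Form0 P) : Form P → Form P
  | .atom p => .atom p
  | .neg φ => .neg (rel α φ)
  | .and φ ψ => .and (rel α φ) (rel α ψ)
  | .all φ => .all (Form.impl α.toForm (rel α φ))
  | .boxle φ => .boxle (Form.impl α.toForm (rel α φ))
  | .boxlt φ => .boxlt (Form.impl α.toForm (rel α φ))
  | .ann φ₀ ψ => .ann φ₀ ψ

lemma toForm_static {P : Type} (α : Form0 P) : α.toForm.isStatic := by
  induction α <;> simp_all [Form0.toForm, Form.isStatic]

lemma sat_toForm {P : Type} (M : PrefModel P) (w : M.W) (α : Form0 P) :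
    sat M w α.toForm ↔ sat0 M.v w α := by
  induction α <;> simp_all [Form0.toForm, sat, sat0]

lemma rel_static {P : Type} (α : Form0 P) (φ : Form P) (h : φ.isStatic) :
    (Form.rel α φ).isStatic := by
  induction φ <;>
    simp_all [Form.rel, Form.isStatic, Form.impl, toForm_static]

lemma sat_rel {P : Type} (α : Form0 P) (φ : Form P) (h : φ.isStatic) :
    ∀ (M : PrefModel P) (w : M.W) (hw : sat0 M.v w α),
      sat (M.announce α) ⟨w, hw⟩ φ ↔ sat M w (Form.rel α φ) := by
  induction φ with
  | atom p => intro M w hw; simp [Form.rel, sat, PrefModel.announce]; exact Iff.rfl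
  | neg φ ih =>
      intro M w hw
      simp [Form.rel, sat, ih h M w hw]
  | and φ ψ ihφ ihψ =>
      intro M w hw
      simp [Form.rel, sat, ihφ h.1 M w hw, ihψ h.2 M w hw]
  | all φ ih =>
      intro M w hw
      simp only [Form.rel, sat, Form.impl, sat_toForm, not_and, not_not]
      constructor
      · intro H w' hα; exact (ih h M w' hα).mp (H ⟨w', hα⟩)
      · intro H w'; exact (ih h M w'.1 w'.2).mpr (H w'.1 w'.2)
  | boxle φ ih =>
      intro M w hw
      simp only [Form.rel, sat, Form.impl, sat_toForm, not_and, not_not]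
      constructor
      · intro H w' hle hα; exact (ih h M w' hα).mp (H ⟨w', hα⟩ hle)
      · intro H w' hle; exact (ih h M w'.1 w'.2).mpr (H w'.1 hle w'.2)
  | boxlt φ ih =>
      intro M w hw
      simp only [Form.rel, sat, Form.impl, sat_toForm, not_and, not_not]
      constructor
      · intro H w' hlt hα
        exact (ih h M w' hα).mp (H ⟨w', hα⟩ hlt)
      · intro H w' hlt; exact (ih h M w'.1 w'.2).mpr (H w'.1 hlt w'.2)
  | ann φ₀ ψ ih => exact absurd h (by simp [Form.isStatic])

/-- public announcement adds no expressive power to preference logic.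
For every formula `χ` of the dynamic language `L≤!` there is a static formula `χ'`
of `L≤` equivalent to it in every preference model at every world. -/
theorem announcement_reduction {P : Type} (χ : Form P) :
    ∃ χ' : Form P, χ'.isStatic ∧
      ∀ (M : PrefModel P) (w : M.W), sat M w χ ↔ sat M w χ' := by
  induction χ with
  | atom p => exact ⟨.atom p, trivial, fun M w => Iff.rfl⟩
  | neg φ ih =>
      obtain ⟨φ', hs, he⟩ := ih
      exact ⟨.neg φ', hs, fun M w => by simp [sat, he M w]⟩
  | and φ ψ ihφ ihψ =>
      obtain ⟨φ', hs, he⟩ := ihφ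
      obtain ⟨ψ', hs', he'⟩ := ihψ
      exact ⟨.and φ' ψ', ⟨hs, hs'⟩, fun M w => by simp [sat, he M w, he' M w]⟩
  | all φ ih =>
      obtain ⟨φ', hs, he⟩ := ih
      exact ⟨.all φ', hs, fun M w => by simp only [sat]; exact forall_congr' (he M)⟩
  | boxle φ ih =>
      obtain ⟨φ', hs, he⟩ := ih
      exact ⟨.boxle φ', hs, fun M w => by
        simp only [sat]; exact forall_congr' fun w' => imp_congr Iff.rfl (he M w')⟩
  | boxlt φ ih =>
      obtain ⟨φ', hs, he⟩ := ih
      exact ⟨.boxlt φ', hs, fun M w => by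
        simp only [sat]; exact forall_congr' fun w' => imp_congr Iff.rfl (he M w')⟩
  | ann φ₀ ψ ih =>
      obtain ⟨ψ', hs, he⟩ := ih
      refine ⟨Form.impl φ₀.toForm (Form.rel φ₀ ψ'),
        by simp [Form.impl, Form.isStatic, toForm_static, rel_static _ _ hs], fun M w => ?_⟩
      simp only [sat, Form.impl, sat_toForm, not_and, not_not]
      constructor
      · intro H hα
        exact (sat_rel φ₀ ψ' hs M w hα).mp ((he _ _).mp (H hα))
      · intro H hα
        exact (he _ _).mpr ((sat_rel φ₀ ψ' hs M w hα).mpr (H hα))
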